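/- Suppose (X_i, K_i)_{i=1}^N and (Y_i, L_i)_{i=1}^N satisfy the coupled Riccati system and H has full column rank. Then for every i ∈ {1,…,N}, the transfer function U_i is inner on the imaginary axis: for every ω ∈ ℝ such that iω is not in the spectrum of A^{KL}_{i,i−1}, U_i(iω)ᴴ U_i(iω) = I (the identity of size m_i+…+m_N), where ᴴ denotes conjugate transpose. -/

import Mathlib

open Matrix

namespace TriLQG

noncomputable section

variable {N : ℕ}

/-- Index type of an `(N+1)`-block partitioned coordinate space with block sizes `d`. -/
abbrev Idx {N : ℕ} (d : Fin (N+1) → ℕ) : Type := Σ k : Fin (N+1), Fin (d k)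

/-- Indices belonging to blocks `i, i+1, …, N`. -/
abbrev IdxGe {N : ℕ} (d : Fin (N+1) → ℕ) (i : Fin (N+1)) : Type := {x : Idx d // i ≤ x.1}

/-- Indices belonging to blocks `0, 1, …, i`. -/
abbrev IdxLe {N : ℕ} (d : Fin (N+1) → ℕ) (i : Fin (N+1)) : Type := {x : Idx d // x.1 ≤ i}

/-- The selector matrix `E^{↓i}` (columns of the identity for blocks `i,…,N`). -/
def padGe (d : Fin (N+1) → ℕ) (i : Fin (N+1)) : Matrix (Idx d) (IdxGe d i) ℝ :=
  Matrix.of fun r c => if r = (c : Idx d) then 1 else 0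

/-- The selector matrix `E^{↑i}` (columns of the identity for blocks `0,…,i`). -/
def padLe (d : Fin (N+1) → ℕ) (i : Fin (N+1)) : Matrix (Idx d) (IdxLe d i) ℝ :=
  Matrix.of fun r c => if r = (c : Idx d) then 1 else 0

/-- Complexification of a real matrix. -/
def mc {α β : Type*} (M : Matrix α β ℝ) : Matrix α β ℂ := M.map Complex.ofReal

/-- A real square matrix is Hurwitz if its (complex) spectrum lies in the open left half plane. -/
def IsHurwitz {t : Type*} [Fintype t] [DecidableEq t] (M : Matrix t t ℝ) : Prop :=
  ∀ z ∈ spectrum ℂ (mc M), z.re < 0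

open Classical in
/-- The (unique, symmetric, positive semidefinite) square root of a positive semidefinite
real matrix; junk value `0` if the matrix is not positive semidefinite. -/
def msqrt {t : Type*} [Fintype t] [DecidableEq t] (M : Matrix t t ℝ) : Matrix t t ℝ :=
  if h : M.PosSemidef then
    h.1.eigenvectorUnitary.1 * diagonal ((RCLike.ofReal : ℝ → ℝ) ∘ Real.sqrt ∘ h.1.eigenvalues) *
      (star h.1.eigenvectorUnitary : Matrix t t ℝ)
  else 0

/-- Full column rank. -/
def FullColRank {α β : Type*} [Fintype β] {R : Type*} [CommRing R] (M : Matrix α β R) : Prop :=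
  M.rank = Fintype.card β

/-- Full row rank. -/
def FullRowRank {α β : Type*} [Fintype α] [Fintype β] {R : Type*} [CommRing R]
    (M : Matrix α β R) : Prop :=
  M.rank = Fintype.card α

/-- `ARE_p(Ã,B̃,F̃,H̃)` together with its gain: `X` is a symmetric solution of the
control algebraic Riccati equation and `K` is the associated gain. -/
def AREp {n' m' q' : Type*} [Fintype n'] [Fintype m'] [Fintype q'] [DecidableEq m']
    (At : Matrix n' n' ℝ) (Bt : Matrix n' m' ℝ) (Ft : Matrix q' n' ℝ) (Ht : Matrix q' m' ℝ)
    (X : Matrix n' n' ℝ) (K : Matrix m' n' ℝ) : Prop :=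
  X.IsSymm ∧
  Atᵀ * X + X * At - (X * Bt + Ftᵀ * Ht) * (Htᵀ * Ht)⁻¹ * (X * Bt + Ftᵀ * Ht)ᵀ + Ftᵀ * Ft = 0 ∧
  K = -((Htᵀ * Ht)⁻¹ * (X * Bt + Ftᵀ * Ht)ᵀ)

/-- `ARE_d(Ã,C̃,W̃,Ṽ)` together with its gain. -/
def AREd {n' p' r' : Type*} [Fintype n'] [Fintype p'] [Fintype r'] [DecidableEq p']
    (At : Matrix n' n' ℝ) (Ct : Matrix p' n' ℝ) (Wt : Matrix n' r' ℝ) (Vt : Matrix p' r' ℝ)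
    (Y : Matrix n' n' ℝ) (L : Matrix n' p' ℝ) : Prop :=
  Y.IsSymm ∧
  At * Y + Y * Atᵀ - (Ct * Y + Vt * Wtᵀ)ᵀ * (Vt * Vtᵀ)⁻¹ * (Ct * Y + Vt * Wtᵀ) + Wt * Wtᵀ = 0 ∧
  L = -((Ct * Y + Vt * Wtᵀ)ᵀ * (Vt * Vtᵀ)⁻¹)

/-- Lower block triangular sparsity. -/
def IsLBT {N : ℕ} {d e : Fin (N+1) → ℕ} (M : Matrix (Idx d) (Idx e) ℝ) : Prop :=
  ∀ a : Idx d, ∀ b : Idx e, a.1 < b.1 → M a b = 0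

/-- The data of the `(N+1)`-player triangular plant. -/
structure Plant (N : ℕ) where
  nd : Fin (N+1) → ℕ
  md : Fin (N+1) → ℕ
  pd : Fin (N+1) → ℕ
  q : ℕ
  r : ℕ
  A : Matrix (Idx nd) (Idx nd) ℝ
  B : Matrix (Idx nd) (Idx md) ℝ
  C : Matrix (Idx pd) (Idx nd) ℝ
  F : Matrix (Fin q) (Idx nd) ℝ
  H : Matrix (Fin q) (Idx md) ℝ
  W : Matrix (Idx nd) (Fin r) ℝ
  V : Matrix (Idx pd) (Fin r) ℝ

variable (P : Plant N)

/-- family of controller gains `K_i ∈ ℝ^{(m_i+⋯+m_N)×n}` -/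
abbrev KGains (P : Plant N) : Type := (i : Fin (N+1)) → Matrix (IdxGe P.md i) (Idx P.nd) ℝ

/-- family of observer gains `L_i ∈ ℝ^{n×(p_1+⋯+p_i)}` -/
abbrev LGains (P : Plant N) : Type := (i : Fin (N+1)) → Matrix (Idx P.nd) (IdxLe P.pd i) ℝ

/-- family of symmetric matrices `X_i` (or `Y_i`) -/
abbrev SFam (P : Plant N) : Type := Fin (N+1) → Matrix (Idx P.nd) (Idx P.nd) ℝ

def Bdown (i : Fin (N+1)) : Matrix (Idx P.nd) (IdxGe P.md i) ℝ := P.B.submatrix id Subtype.val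
def Hdown (i : Fin (N+1)) : Matrix (Fin P.q) (IdxGe P.md i) ℝ := P.H.submatrix id Subtype.val
def Cup (i : Fin (N+1)) : Matrix (IdxLe P.pd i) (Idx P.nd) ℝ := P.C.submatrix Subtype.val id
def Vup (i : Fin (N+1)) : Matrix (IdxLe P.pd i) (Fin P.r) ℝ := P.V.submatrix Subtype.val id

/-- `Ψ_{↓i}^{↓i} = (H^{↓i})ᵀ H^{↓i}` -/
def Psidd (i : Fin (N+1)) : Matrix (IdxGe P.md i) (IdxGe P.md i) ℝ := (Hdown P i)ᵀ * Hdown P i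

/-- `Φ_{↑j}^{↑j} = V_{↑j} (V_{↑j})ᵀ` -/
def Phiuu (j : Fin (N+1)) : Matrix (IdxLe P.pd j) (IdxLe P.pd j) ℝ := Vup P j * (Vup P j)ᵀ

/-- The coupled Riccati system (2a)–(2d) of the paper. -/
def Coupled (X : SFam P) (K : KGains P) (Y : SFam P) (L : LGains P) : Prop :=
  AREp P.A (Bdown P 0) P.F (Hdown P 0) (X 0) (K 0) ∧
  (∀ t : Fin N,
    AREp (P.A + L t.castSucc * Cup P t.castSucc) (Bdown P t.succ)
      (-(Hdown P t.castSucc * K t.castSucc)) (Hdown P t.succ) (X t.succ) (K t.succ)) ∧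
  AREd P.A (Cup P (Fin.last N)) P.W (Vup P (Fin.last N)) (Y (Fin.last N)) (L (Fin.last N)) ∧
  (∀ t : Fin N,
    AREd (P.A + Bdown P t.succ * K t.succ) (Cup P t.castSucc)
      (-(L t.succ * Vup P t.succ)) (Vup P t.castSucc) (Y t.castSucc) (L t.castSucc))

/-- `A^{KL}_{k+1,k}` for `k = 0, 1, …, N+1` (`k = 0` gives `A+BK_1`,
`k = N+1` gives `A+L_N C`). -/
def AKL (K : KGains P) (L : LGains P) (k : Fin (N+2)) : Matrix (Idx P.nd) (Idx P.nd) ℝ :=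
  if hk : k.1 < N + 1 then
    (if k.1 = 0 then P.A + Bdown P 0 * K 0
     else
       have h1 : k.1 - 1 < N + 1 := by omega
       P.A + Bdown P ⟨k.1, hk⟩ * K ⟨k.1, hk⟩ +
         L ⟨k.1 - 1, h1⟩ * Cup P ⟨k.1 - 1, h1⟩)
  else P.A + L (Fin.last N) * Cup P (Fin.last N)

/-- index set of the `n(N+1)`-dimensional controller state space -/
abbrev CtrIx {N : ℕ} (nd : Fin (N+1) → ℕ) : Type := Fin (N+1) × Idx nd

/-- index set of the `n(N+2)`-dimensional closed-loop state space:
`N+1` controller blocks and one plant block -/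
abbrev BigIx {N : ℕ} (nd : Fin (N+1) → ℕ) : Type := CtrIx nd ⊕ Idx nd

/-- the incidence matrix `ζ` -/
def zetaN (nd : Fin (N+1) → ℕ) : Matrix (CtrIx nd) (CtrIx nd) ℝ :=
  Matrix.of fun x y => if y.1 ≤ x.1 ∧ x.2 = y.2 then 1 else 0

/-- block diagonal matrix -/
def blkDiagN {nd : Fin (N+1) → ℕ} (f : Fin (N+1) → Matrix (Idx nd) (Idx nd) ℝ) :
    Matrix (CtrIx nd) (CtrIx nd) ℝ :=
  Matrix.of fun x y => if x.1 = y.1 then f x.1 x.2 y.2 else 0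

/-- `A_K` of the optimal controller realization -/
def AK (K : KGains P) (L : LGains P) : Matrix (CtrIx P.nd) (CtrIx P.nd) ℝ :=
  blkDiagN (fun _ => P.A) + blkDiagN (fun k => L k * Cup P k) +
    zetaN P.nd * blkDiagN (fun k => Bdown P k * K k) * (zetaN P.nd)⁻¹

/-- `B_K` of the optimal controller realization -/
def BK (L : LGains P) : Matrix (CtrIx P.nd) (Idx P.pd) ℝ :=
  Matrix.of fun x c => -((L x.1 * (padLe P.pd x.1)ᵀ) x.2 c)

/-- `C_K` of the optimal controller realization -/
def CK (K : KGains P) : Matrix (Idx P.md) (CtrIx P.nd) ℝ :=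
  (Matrix.of fun rr (x : CtrIx P.nd) => (padGe P.md x.1 * K x.1) rr x.2) * (zetaN P.nd)⁻¹

/-- closed-loop `𝒜` -/
def Acal (K : KGains P) (L : LGains P) : Matrix (BigIx P.nd) (BigIx P.nd) ℝ :=
  Matrix.fromBlocks (AK P K L) (BK P L * P.C) (P.B * CK P K) P.A

/-- closed-loop `ℬ` -/
def Bcal : Matrix (BigIx P.nd) (Idx P.md) ℝ :=
  Matrix.of fun x j => Sum.elim (fun _ => (0:ℝ)) (fun a => P.B a j) x

/-- closed-loop `𝒲` -/
def Wcal (L : LGains P) : Matrix (BigIx P.nd) (Fin P.r) ℝ :=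
  Matrix.of fun x j => Sum.elim (fun y => (BK P L * P.V) y j) (fun a => P.W a j) x

/-- closed-loop `ℱ` -/
def Fcal (K : KGains P) : Matrix (Fin P.q) (BigIx P.nd) ℝ :=
  Matrix.of fun i x => Sum.elim (fun y => (P.H * CK P K) i y) (fun a => P.F i a) x

/-- closed-loop `𝒞` -/
def Ccal : Matrix (Idx P.pd) (BigIx P.nd) ℝ :=
  Matrix.of fun i x => Sum.elim (fun _ => (0:ℝ)) (fun a => P.C i a) x

/-- block index of a closed-loop index -/
def blkOf {nd : Fin (N+1) → ℕ} (x : BigIx nd) : Fin (N+2) :=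
  Sum.elim (fun y => y.1.castSucc) (fun _ => Fin.last (N+1)) x

/-- within-block state of a closed-loop index -/
def stOf {nd : Fin (N+1) → ℕ} (x : BigIx nd) : Idx nd :=
  Sum.elim Prod.snd id x

/-- the incidence matrix `ζ̄` of the `(N+2)`-fold block structure -/
def zetaBar (nd : Fin (N+1) → ℕ) : Matrix (BigIx nd) (BigIx nd) ℝ :=
  Matrix.of fun x y => if blkOf y ≤ blkOf x ∧ stOf x = stOf y then 1 else 0

/-- embedding of a within-block index into the closed-loop index set, at block `k` -/
def emb {nd : Fin (N+1) → ℕ} (k : Fin (N+2)) (a : Idx nd) : BigIx nd :=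
  if h : k.1 < N + 1 then Sum.inl (⟨⟨k.1, h⟩, a⟩ : CtrIx nd) else Sum.inr a

/-- `𝒦_i` of the paper (eq. (9)). -/
def Kcal (K : KGains P) (i : Fin (N+1)) : Matrix (IdxGe P.md i) (BigIx P.nd) ℝ :=
  (padGe P.md i)ᵀ *
    Matrix.of fun (rr : Idx P.md) (x : BigIx P.nd) =>
      Sum.elim
        (fun y : CtrIx P.nd =>
          if hl : y.1.1 < N then
            (if y.1 < i then (0:ℝ)
             else
               have h1 : y.1.1 + 1 < N + 1 := by omega
               (padGe P.md ⟨y.1.1 + 1, h1⟩ * K ⟨y.1.1 + 1, h1⟩ -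
                   padGe P.md y.1 * K y.1) rr y.2)
          else (-(padGe P.md (Fin.last N) * K (Fin.last N))) rr y.2)
        (fun a => (padGe P.md i * K i) rr a) x

/-- `ℒ_j` of the paper (eq. (10)). -/
def Lcal (L : LGains P) (j : Fin (N+1)) : Matrix (BigIx P.nd) (IdxLe P.pd j) ℝ :=
  Matrix.of fun x c =>
    Sum.elim
      (fun y : CtrIx P.nd =>
        if y.1 < j then (L y.1 * (padLe P.pd y.1)ᵀ * padLe P.pd j) y.2 c else (L j) y.2 c)
      (fun a => (L j) a c) x

/-- `J̃_i` of the paper (eq. (11)). -/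
def Jtil (nd : Fin (N+1) → ℕ) (i : Fin (N+1)) : Matrix (Idx nd) (BigIx nd) ℝ :=
  Matrix.of fun a x =>
    Sum.elim
      (fun y : CtrIx nd => if 0 < i.1 ∧ y.1.1 = i.1 - 1 ∧ a = y.2 then (1:ℝ) else 0)
      (fun b => if a = b then (-1:ℝ) else 0) x

/-- `Ĵ_j` of the paper (eq. (11)). -/
def Jhat (nd : Fin (N+1) → ℕ) (j : Fin (N+1)) : Matrix (BigIx nd) (Idx nd) ℝ :=
  Matrix.of fun x a =>
    Sum.elim
      (fun y : CtrIx nd => if j < y.1 ∧ y.2 = a then (1:ℝ) else 0)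
      (fun b => if b = a then (1:ℝ) else 0) x

/-- `Γ_i = −(Ψ_{↓i}^{↓i})^{1/2} 𝒦_i` for `i ≥ 1` (Lemma 2 of the paper). -/
def Gam (K : KGains P) (i : Fin (N+1)) : Matrix (IdxGe P.md i) (BigIx P.nd) ℝ :=
  -(msqrt (Psidd P i) * Kcal P K i)

/-- `Λ_j = −ℒ_j (Φ_{↑j}^{↑j})^{1/2}` for `j ≤ N` (Lemma 2 of the paper). -/
def Lam (L : LGains P) (j : Fin (N+1)) : Matrix (BigIx P.nd) (IdxLe P.pd j) ℝ :=
  -(Lcal P L j * msqrt (Phiuu P j))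

/-- the inner factor `U_1(s)` -/
def Uone (K : KGains P) (L : LGains P) (s : ℂ) : Matrix (Fin P.q) (IdxGe P.md 0) ℂ :=
  mc (P.F + Hdown P 0 * K 0) * (s • 1 - mc (AKL P K L 0))⁻¹ * mc (Bdown P 0) *
      (mc (msqrt (Psidd P 0)))⁻¹ +
    mc (Hdown P 0) * (mc (msqrt (Psidd P 0)))⁻¹

/-- the inner factor `U_{t+2}(s)` (paper indexing), mapping block level `t+1` to `t` -/
def Usucc (K : KGains P) (L : LGains P) (t : Fin N) (s : ℂ) :
    Matrix (IdxGe P.md t.castSucc) (IdxGe P.md t.succ) ℂ :=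
  mc (msqrt (Psidd P t.castSucc)) *
      mc ((padGe P.md t.castSucc)ᵀ *
        (padGe P.md t.succ * K t.succ - padGe P.md t.castSucc * K t.castSucc)) *
      (s • 1 - mc (AKL P K L t.succ.castSucc))⁻¹ * mc (Bdown P t.succ) *
      (mc (msqrt (Psidd P t.succ)))⁻¹ +
    mc (msqrt (Psidd P t.castSucc)) * mc ((padGe P.md t.castSucc)ᵀ * padGe P.md t.succ) *
      (mc (msqrt (Psidd P t.succ)))⁻¹

/-- the co-inner factor `V_{N+1}(s)` (paper indexing: the last one) -/
def Vlast (K : KGains P) (L : LGains P) (s : ℂ) :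
    Matrix (IdxLe P.pd (Fin.last N)) (Fin P.r) ℂ :=
  (mc (msqrt (Phiuu P (Fin.last N))))⁻¹ * mc (Cup P (Fin.last N)) *
      (s • 1 - mc (AKL P K L (Fin.last (N+1))))⁻¹ *
      mc (P.W + L (Fin.last N) * Vup P (Fin.last N)) +
    (mc (msqrt (Phiuu P (Fin.last N))))⁻¹ * mc (Vup P (Fin.last N))

/-- the co-inner factor `V_{t+1}(s)` (paper indexing), for `t+1 ≤ N` -/
def Vmid (K : KGains P) (L : LGains P) (t : Fin N) (s : ℂ) :
    Matrix (IdxLe P.pd t.castSucc) (IdxLe P.pd t.succ) ℂ :=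
  (mc (msqrt (Phiuu P t.castSucc)))⁻¹ * mc (Cup P t.castSucc) *
      (s • 1 - mc (AKL P K L t.succ.castSucc))⁻¹ *
      mc ((L t.castSucc * (padLe P.pd t.castSucc)ᵀ - L t.succ * (padLe P.pd t.succ)ᵀ) *
        padLe P.pd t.succ * msqrt (Phiuu P t.succ)) +
    (mc (msqrt (Phiuu P t.castSucc)))⁻¹ *
      mc ((padLe P.pd t.castSucc)ᵀ * padLe P.pd t.succ * msqrt (Phiuu P t.succ))

/-- the product `U_1(s) U_2(s) ⋯ U_i(s)` -/
def Uprod (K : KGains P) (L : LGains P) (s : ℂ) :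
    (i : Fin (N+1)) → Matrix (Fin P.q) (IdxGe P.md i) ℂ :=
  Fin.induction (motive := fun i => Matrix (Fin P.q) (IdxGe P.md i) ℂ)
    (Uone P K L s) (fun t ih => ih * Usucc P K L t s)

/-- the product `V_j(s) V_{j+1}(s) ⋯ V_{N+1}(s)` -/
def Vprod (K : KGains P) (L : LGains P) (s : ℂ) :
    (j : Fin (N+1)) → Matrix (IdxLe P.pd j) (Fin P.r) ℂ :=
  Fin.reverseInduction (motive := fun j => Matrix (IdxLe P.pd j) (Fin P.r) ℂ)
    (Vlast P K L s) (fun t ih => Vmid P K L t s * ih)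

/-- closed-loop transfer function `G11(s) = ℱ(sI−𝒜)⁻¹𝒲` -/
def G11 (K : KGains P) (L : LGains P) (s : ℂ) : Matrix (Fin P.q) (Fin P.r) ℂ :=
  mc (Fcal P K) * (s • 1 - mc (Acal P K L))⁻¹ * mc (Wcal P L)

/-- closed-loop transfer function `G12(s) = ℱ(sI−𝒜)⁻¹ℬ + H` -/
def G12 (K : KGains P) (L : LGains P) (s : ℂ) : Matrix (Fin P.q) (Idx P.md) ℂ :=
  mc (Fcal P K) * (s • 1 - mc (Acal P K L))⁻¹ * mc (Bcal P) + mc P.H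

/-- closed-loop transfer function `G21(s) = 𝒞(sI−𝒜)⁻¹𝒲 + V` -/
def G21 (K : KGains P) (L : LGains P) (s : ℂ) : Matrix (Idx P.pd) (Fin P.r) ℂ :=
  mc (Ccal P) * (s • 1 - mc (Acal P K L))⁻¹ * mc (Wcal P L) + mc P.V

end

end TriLQG

namespace TriLQG

section Aux

open Matrix

-- ### complexification lemmas

lemma mc_mul {α β γ : Type*} [Fintype β] (M : Matrix α β ℝ) (N : Matrix β γ ℝ) :
    mc (M * N) = mc M * mc N := by
  ext a b; simp [mc, Matrix.mul_apply]

lemma mc_one {α : Type*} [Fintype α] [DecidableEq α] : mc (1 : Matrix α α ℝ) = 1 := by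
  simp [mc]

lemma mc_add {α β : Type*} (M N : Matrix α β ℝ) : mc (M + N) = mc M + mc N := by
  ext a b; simp [mc]

lemma mc_neg {α β : Type*} (M : Matrix α β ℝ) : mc (-M) = -mc M := by
  ext a b; simp [mc]

lemma mc_ct {α β : Type*} (M : Matrix α β ℝ) : (mc M)ᴴ = mc Mᵀ := by
  ext a b; simp [mc, Matrix.conjTranspose_apply]

lemma mc_inv {α : Type*} [Fintype α] [DecidableEq α] (M : Matrix α α ℝ)
    (h : IsUnit M.det) : (mc M)⁻¹ = mc M⁻¹ := by
  apply Matrix.inv_eq_left_inv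
  rw [← mc_mul, Matrix.nonsing_inv_mul M h, mc_one]

-- ### the core algebraic innerness lemma

lemma inner_core {n' m' q' : Type*} [Fintype n'] [Fintype m'] [Fintype q']
    [DecidableEq n'] [DecidableEq m']
    (Ah : Matrix n' n' ℝ) (Bh : Matrix n' m' ℝ) (Ch : Matrix q' n' ℝ) (Dh : Matrix q' m' ℝ)
    (X : Matrix n' n' ℝ) (hX : X.IsSymm)
    (h1 : Dhᵀ * Dh = 1)
    (h2 : Chᵀ * Ch = -(Ahᵀ * X + X * Ah))
    (h3 : Dhᵀ * Ch = -(Bhᵀ * X))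
    (s : ℂ) (hs : star s = -s)
    (hinv : IsUnit (s • 1 - mc Ah)) :
    (mc Ch * (s • 1 - mc Ah)⁻¹ * mc Bh + mc Dh)ᴴ *
      (mc Ch * (s • 1 - mc Ah)⁻¹ * mc Bh + mc Dh) = 1 := by
  have hdet : IsUnit (s • 1 - mc Ah).det := (Matrix.isUnit_iff_isUnit_det _).mp hinv
  obtain ⟨S, hS⟩ : ∃ S, S = s • 1 - mc Ah := ⟨_, rfl⟩
  rw [← hS] at hdet ⊢
  have hSR : S * S⁻¹ = 1 := Matrix.mul_nonsing_inv S hdet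
  have hSH : Sᴴ = -(s • 1) - mc Ahᵀ := by
    rw [hS, Matrix.conjTranspose_sub, Matrix.conjTranspose_smul, mc_ct]
    simp [hs]
  have hXh : mc Xᵀ = mc X := by rw [hX]
  set b := mc Bh; set c := mc Ch; set d := mc Dh; set x := mc X
  have hkey : cᴴ * c = Sᴴ * x + x * S := by
    rw [mc_ct, ← mc_mul, h2, hSH, hS, mc_neg, mc_add, mc_mul, mc_mul]
    rw [sub_mul, mul_sub, neg_mul, Matrix.smul_mul, Matrix.mul_smul, Matrix.one_mul,
      Matrix.mul_one]
    abel
  have hRHSH : ∀ Z : Matrix n' m' ℂ, S⁻¹ᴴ * (Sᴴ * Z) = Z := by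
    intro Z
    rw [← Matrix.mul_assoc, ← Matrix.conjTranspose_mul, hSR, Matrix.conjTranspose_one,
      Matrix.one_mul]
  have hSRb : S * (S⁻¹ * b) = b := by rw [← Matrix.mul_assoc, hSR, Matrix.one_mul]
  have hDC : dᴴ * c = -(bᴴ * x) := by rw [mc_ct, ← mc_mul, h3, mc_neg, mc_mul, mc_ct]
  have hCD : cᴴ * d = -(x * b) := by
    have := congrArg Matrix.conjTranspose hDC
    rw [Matrix.conjTranspose_mul, Matrix.conjTranspose_conjTranspose,
      Matrix.conjTranspose_neg, Matrix.conjTranspose_mul,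
      Matrix.conjTranspose_conjTranspose] at this
    rw [this]
    show -(xᴴ * b) = _
    rw [mc_ct, hXh]
  have hDD : dᴴ * d = 1 := by rw [mc_ct, ← mc_mul, h1, mc_one]
  rw [Matrix.conjTranspose_add, Matrix.conjTranspose_mul, Matrix.conjTranspose_mul]
  simp only [Matrix.add_mul, Matrix.mul_add, Matrix.mul_assoc]
  rw [hDD, hCD]
  have t3 : dᴴ * (c * (S⁻¹ * b)) = -(bᴴ * (x * (S⁻¹ * b))) := by
    rw [← Matrix.mul_assoc, hDC]
    simp only [Matrix.neg_mul, Matrix.mul_assoc]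
  rw [t3]
  have t1 : cᴴ * (c * (S⁻¹ * b)) = Sᴴ * (x * (S⁻¹ * b)) + x * (S * (S⁻¹ * b)) := by
    rw [← Matrix.mul_assoc, hkey]
    simp only [Matrix.add_mul, Matrix.mul_assoc]
  rw [t1, hSRb, Matrix.mul_add, hRHSH]
  simp only [Matrix.mul_add, Matrix.mul_neg]
  abel

-- ### positive definiteness lemmas

lemma mulVec_ker_of_fullColRank {q' m' : Type*} [Fintype q'] [Fintype m'] [DecidableEq m']
    (Hm : Matrix q' m' ℝ) (h : FullColRank Hm) : ∀ x, Hm *ᵥ x = 0 → x = 0 := by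
  intro x hx
  have hk := LinearMap.finrank_range_add_finrank_ker (Hm.mulVecLin)
  rw [Module.finrank_fintype_fun_eq_card] at hk
  have hr : Module.finrank ℝ (LinearMap.range Hm.mulVecLin) = Fintype.card m' := h
  have hker : Module.finrank ℝ (LinearMap.ker Hm.mulVecLin) = 0 := by omega
  have hbot : LinearMap.ker Hm.mulVecLin = ⊥ := Submodule.finrank_eq_zero.mp hker
  have : x ∈ LinearMap.ker Hm.mulVecLin := by
    simpa [Matrix.mulVecLin_apply] using hx
  simpa [hbot] using this

lemma posDef_transpose_mul_self {q' m' : Type*} [Fintype q'] [Fintype m']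
    (Pm : Matrix q' m' ℝ) (hP : ∀ x, Pm *ᵥ x = 0 → x = 0) : (Pmᵀ * Pm).PosDef := by
  rw [Matrix.posDef_iff_dotProduct_mulVec]
  constructor
  · rw [Matrix.IsHermitian, Matrix.conjTranspose_eq_transpose_of_trivial,
      Matrix.transpose_mul, Matrix.transpose_transpose]
  · intro x hx
    have hPx : Pm *ᵥ x ≠ 0 := fun hc => hx (hP x hc)
    have hsx : star x = x := by funext i; exact star_trivial _
    have hrw : star x ⬝ᵥ ((Pmᵀ * Pm) *ᵥ x) = (Pm *ᵥ x) ⬝ᵥ (Pm *ᵥ x) := by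
      rw [hsx, ← Matrix.mulVec_mulVec, Matrix.dotProduct_mulVec, Matrix.vecMul_transpose]
    rw [hrw]
    have : 0 ≤ (Pm *ᵥ x) ⬝ᵥ (Pm *ᵥ x) := Finset.sum_nonneg fun i _ => mul_self_nonneg _
    rcases this.lt_or_eq with hlt | heq
    · exact hlt
    · exact absurd ((dotProduct_self_eq_zero).mp heq.symm) hPx

-- ### square-root lemmas

lemma msqrt_eq {t : Type*} [Fintype t] [DecidableEq t] {M : Matrix t t ℝ}
    (h : M.PosSemidef) : msqrt M = h.1.eigenvectorUnitary.1 *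
      diagonal ((RCLike.ofReal : ℝ → ℝ) ∘ Real.sqrt ∘ h.1.eigenvalues) *
      (star h.1.eigenvectorUnitary : Matrix t t ℝ) := by
  rw [msqrt, dif_pos h]

lemma msqrt_mul_self {t : Type*} [Fintype t] [DecidableEq t] {M : Matrix t t ℝ}
    (h : M.PosSemidef) : msqrt M * msqrt M = M := by
  rw [msqrt_eq h]
  have hU : (star h.1.eigenvectorUnitary : Matrix t t ℝ) * h.1.eigenvectorUnitary.1 = 1 :=
    Unitary.star_mul_self_of_mem h.1.eigenvectorUnitary.2
  have hD : diagonal ((RCLike.ofReal : ℝ → ℝ) ∘ Real.sqrt ∘ h.1.eigenvalues) *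
      diagonal ((RCLike.ofReal : ℝ → ℝ) ∘ Real.sqrt ∘ h.1.eigenvalues) =
      diagonal ((RCLike.ofReal : ℝ → ℝ) ∘ h.1.eigenvalues) := by
    rw [diagonal_mul_diagonal]
    congr 1; funext i
    simp [Real.mul_self_sqrt (h.eigenvalues_nonneg i)]
  conv_rhs => rw [h.1.spectral_theorem]
  rw [Unitary.conjStarAlgAut_apply]
  simp only [Matrix.mul_assoc]
  rw [← Matrix.mul_assoc (star _ : Matrix t t ℝ) _ _, hU, Matrix.one_mul,
    ← Matrix.mul_assoc (diagonal _), hD]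

lemma msqrt_symm {t : Type*} [Fintype t] [DecidableEq t] {M : Matrix t t ℝ}
    (h : M.PosSemidef) : (msqrt M)ᵀ = msqrt M := by
  rw [msqrt_eq h, ← Matrix.conjTranspose_eq_transpose_of_trivial]
  rw [conjTranspose_mul, conjTranspose_mul, star_eq_conjTranspose, conjTranspose_conjTranspose,
    diagonal_conjTranspose, Matrix.mul_assoc]
  congr 2

lemma msqrt_det_isUnit {t : Type*} [Fintype t] [DecidableEq t] {M : Matrix t t ℝ}
    (h : M.PosDef) : IsUnit (msqrt M).det := by
  have h2 : (msqrt M).det * (msqrt M).det = M.det := by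
    rw [← Matrix.det_mul, msqrt_mul_self h.posSemidef]
  have : M.det ≠ 0 := ne_of_gt h.det_pos
  have hne : (msqrt M).det ≠ 0 := by
    intro hc; rw [hc, mul_zero] at h2; exact this h2.symm
  exact isUnit_iff_ne_zero.mpr hne

lemma msqrt_inv_symm {t : Type*} [Fintype t] [DecidableEq t] {M : Matrix t t ℝ}
    (h : M.PosDef) : ((msqrt M)⁻¹)ᵀ = (msqrt M)⁻¹ := by
  rw [Matrix.transpose_nonsing_inv, msqrt_symm h.posSemidef]

lemma msqrt_inv_mul_mul_inv {t : Type*} [Fintype t] [DecidableEq t] {M : Matrix t t ℝ}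
    (h : M.PosDef) : (msqrt M)⁻¹ * M * (msqrt M)⁻¹ = 1 := by
  nth_rewrite 2 [← msqrt_mul_self h.posSemidef]
  simp only [← Matrix.mul_assoc]
  rw [Matrix.nonsing_inv_mul _ (msqrt_det_isUnit h), Matrix.one_mul,
    Matrix.mul_nonsing_inv _ (msqrt_det_isUnit h)]

-- ### consequences of the Riccati equation

lemma AREp_consequences {n' m' q' : Type*} [Fintype n'] [Fintype m'] [Fintype q']
    [DecidableEq m']
    (At : Matrix n' n' ℝ) (Bt : Matrix n' m' ℝ) (Ft : Matrix q' n' ℝ) (Ht : Matrix q' m' ℝ)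
    (X : Matrix n' n' ℝ) (K : Matrix m' n' ℝ)
    (hare : AREp At Bt Ft Ht X K) (hdet : IsUnit (Htᵀ * Ht).det) :
    Htᵀ * (Ft + Ht * K) = -(Btᵀ * X) ∧
    (Ft + Ht * K)ᵀ * (Ft + Ht * K) = -((At + Bt * K)ᵀ * X + X * (At + Bt * K)) := by
  obtain ⟨hX, heq, hK⟩ := hare
  set M : Matrix n' m' ℝ := X * Bt + Ftᵀ * Ht with hM
  have hMT : Mᵀ = Btᵀ * X + Htᵀ * Ft := by
    rw [hM, Matrix.transpose_add, Matrix.transpose_mul, Matrix.transpose_mul,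
      Matrix.transpose_transpose, hX]
  have hPsiK : Htᵀ * Ht * K = -Mᵀ := by
    rw [hK, Matrix.mul_neg, ← Matrix.mul_assoc, Matrix.mul_nonsing_inv _ hdet,
      Matrix.one_mul]
  have claim1 : Htᵀ * (Ft + Ht * K) = -(Btᵀ * X) := by
    rw [Matrix.mul_add, ← Matrix.mul_assoc, hPsiK, hMT]
    abel
  refine ⟨claim1, ?_⟩
  have hMK : M * K = -(M * (Htᵀ * Ht)⁻¹ * Mᵀ) := by
    rw [hK, Matrix.mul_neg, Matrix.mul_assoc]
  have hZero : Atᵀ * X + X * At + Ftᵀ * Ft + M * K = 0 := by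
    rw [hMK]
    calc Atᵀ * X + X * At + Ftᵀ * Ft + -(M * (Htᵀ * Ht)⁻¹ * Mᵀ)
        = Atᵀ * X + X * At - M * (Htᵀ * Ht)⁻¹ * Mᵀ + Ftᵀ * Ft := by abel
      _ = 0 := heq
  have hZero' : Atᵀ * X + X * At + Ftᵀ * Ft + (X * (Bt * K) + Ftᵀ * (Ht * K)) = 0 := by
    have hexp : M * K = X * (Bt * K) + Ftᵀ * (Ht * K) := by
      rw [hM, Matrix.add_mul, Matrix.mul_assoc, Matrix.mul_assoc]
    rw [← hexp]; exact hZero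
  have e : (Ft + Ht * K)ᵀ * (Ft + Ht * K) + ((At + Bt * K)ᵀ * X + X * (At + Bt * K))
      = (Atᵀ * X + X * At + Ftᵀ * Ft + (X * (Bt * K) + Ftᵀ * (Ht * K)))
        + (Kᵀ * (Htᵀ * (Ft + Ht * K)) + Kᵀ * (Btᵀ * X)) := by
    simp only [Matrix.transpose_add, Matrix.transpose_mul, Matrix.add_mul, Matrix.mul_add,
      Matrix.mul_assoc]
    abel
  rw [claim1, hZero'] at e
  have e2 : (Ft + Ht * K)ᵀ * (Ft + Ht * K) + ((At + Bt * K)ᵀ * X + X * (At + Bt * K)) = 0 := by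
    rw [e, Matrix.mul_neg]
    abel
  exact eq_neg_of_add_eq_zero_left e2

-- ### selector-matrix structural lemmas

lemma padGe_proj_apply {N : ℕ} (d : Fin (N+1) → ℕ) (i : Fin (N+1)) (r c : Idx d) :
    (padGe d i * (padGe d i)ᵀ) r c = if r = c ∧ i ≤ r.1 then 1 else 0 := by
  classical
  rw [Matrix.mul_apply]
  by_cases hir : i ≤ r.1
  · rw [Finset.sum_eq_single (⟨r, hir⟩ : IdxGe d i)]
    · by_cases hrc : r = c
      · subst hrc; simp [padGe, hir]
      · have h2 : ¬ c = r := fun h => hrc h.symm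
        simp [padGe, hrc, hir, h2]
    · intro x _ hx
      have : ¬ (r = (x : Idx d)) := by
        intro h; exact hx (Subtype.ext h.symm)
      simp [padGe, this]
    · intro h; exact absurd (Finset.mem_univ _) h
  · rw [Finset.sum_eq_zero, if_neg (fun h => hir h.2)]
    intro x _
    have : ¬ (r = (x : Idx d)) := by
      intro h; exact hir (h ▸ x.2)
    simp [padGe, this]

lemma padGe_proj_absorb {N : ℕ} (d : Fin (N+1) → ℕ) {i i' : Fin (N+1)} (h : i ≤ i') :
    padGe d i * (padGe d i)ᵀ * padGe d i' = padGe d i' := by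
  classical
  ext r b
  rw [Matrix.mul_apply]
  rw [Finset.sum_congr rfl (fun c _ => by rw [padGe_proj_apply])]
  by_cases hrb : r = (b : Idx d)
  · rw [Finset.sum_eq_single (b : Idx d)]
    · have hib : i ≤ ((b : Idx d)).1 := le_trans h b.2
      simp [padGe, hrb, hib]
    · intro c _ hc
      by_cases h1 : r = c
      · simp [padGe, h1, fun hh : c = (b : Idx d) => hc hh]
      · simp [h1]
    · intro hmem; exact absurd (Finset.mem_univ _) hmem
  · rw [Finset.sum_eq_zero]
    · simp [padGe, hrb]
    · intro c _
      by_cases h1 : r = c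
      · subst h1; simp [padGe, hrb]
      · simp [h1]

lemma padGeT_proj_absorb {N : ℕ} (d : Fin (N+1) → ℕ) {i i' : Fin (N+1)} (h : i ≤ i') :
    (padGe d i')ᵀ * (padGe d i * (padGe d i)ᵀ) = (padGe d i')ᵀ := by
  have := congrArg Matrix.transpose (padGe_proj_absorb d h)
  rwa [Matrix.transpose_mul, Matrix.transpose_mul, Matrix.transpose_transpose] at this

lemma padGeT_mul_padGe {N : ℕ} (d : Fin (N+1) → ℕ) (i : Fin (N+1)) :
    (padGe d i)ᵀ * padGe d i = 1 := by
  classical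
  ext a b
  rw [Matrix.mul_apply]
  rw [Finset.sum_eq_single ((a : Idx d))]
  · by_cases hab : a = b
    · subst hab; simp [padGe, Matrix.one_apply]
    · have h1 : ¬((a : Idx d) = (b : Idx d)) := fun h => hab (Subtype.ext h)
      have h2 : ¬((b : Idx d) = (a : Idx d)) := fun h => h1 h.symm
      simp [padGe, Matrix.one_apply, hab, h1, h2]
  · intro c _ hc
    simp [padGe, hc]
  · intro hmem; exact absurd (Finset.mem_univ _) hmem

lemma padGe_mulVec_ker {N : ℕ} (d : Fin (N+1) → ℕ) (i : Fin (N+1)) :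
    ∀ x, padGe d i *ᵥ x = 0 → x = 0 := by
  intro x hx
  have : ((padGe d i)ᵀ * padGe d i) *ᵥ x = 0 := by
    rw [← Matrix.mulVec_mulVec, hx, Matrix.mulVec_zero]
  rwa [padGeT_mul_padGe, Matrix.one_mulVec] at this

lemma Hdown_eq {N : ℕ} (P : Plant N) (i : Fin (N+1)) :
    Hdown P i = P.H * padGe P.md i := by
  classical
  ext r c
  rw [Matrix.mul_apply, Finset.sum_eq_single ((c : Idx P.md))]
  · simp [Hdown, padGe]
  · intro j _ hj
    have : ¬ (j = (c : Idx P.md)) := hj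
    simp [padGe, this]
  · intro hmem; exact absurd (Finset.mem_univ _) hmem

lemma Psidd_posDef {N : ℕ} (P : Plant N) (hH : FullColRank P.H) (i : Fin (N+1)) :
    (Psidd P i).PosDef := by
  rw [Psidd, Hdown_eq]
  apply posDef_transpose_mul_self
  intro x hx
  rw [← Matrix.mulVec_mulVec] at hx
  have h1 : padGe P.md i *ᵥ x = 0 := mulVec_ker_of_fullColRank P.H hH _ hx
  exact padGe_mulVec_ker _ _ _ h1

-- ### evaluation of `AKL`

lemma AKL_zero {N : ℕ} (P : Plant N) (K : KGains P) (L : LGains P) :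
    AKL P K L 0 = P.A + Bdown P 0 * K 0 := by
  have hk : ((0 : Fin (N+2)) : Fin (N+2)).1 < N + 1 := by simp
  have h0 : ((0 : Fin (N+2)) : Fin (N+2)).1 = 0 := by simp
  rw [AKL, dif_pos hk, if_pos h0]

lemma AKL_succ_eval {N : ℕ} (P : Plant N) (K : KGains P) (L : LGains P) (t : Fin N) :
    AKL P K L t.succ.castSucc =
      P.A + Bdown P t.succ * K t.succ + L t.castSucc * Cup P t.castSucc := by
  have hk : (t.succ.castSucc : Fin (N+2)).1 < N + 1 := by
    simp only [Fin.coe_castSucc, Fin.val_succ]; omega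
  have hk0 : ¬ (t.succ.castSucc : Fin (N+2)).1 = 0 := by
    simp only [Fin.coe_castSucc, Fin.val_succ]; omega
  rw [AKL, dif_pos hk, if_neg hk0]
  rfl

end Aux

/-- each factor `U_i` is inner on the imaginary axis:
`U_i(iω)ᴴ U_i(iω) = I` whenever `iω` is not in the spectrum of `A^{KL}_{i,i−1}`.
The first conjunct is the case `i = 1` (`U_1`), the second handles `2 ≤ i`. -/
theorem stmt6 {N : ℕ} (P : Plant N)
    (hdim : ∀ k : Fin (N+1), 0 < P.nd k ∧ 0 < P.md k ∧ 0 < P.pd k)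
    (hA : IsLBT P.A) (hB : IsLBT P.B) (hC : IsLBT P.C)
    (hH : FullColRank P.H)
    (X Y : SFam P) (K : KGains P) (L : LGains P)
    (hcoup : Coupled P X K Y L) :
    (∀ ω : ℝ, (Complex.I * (ω : ℂ)) ∉ spectrum ℂ (mc (AKL P K L 0)) →
      (Uone P K L (Complex.I * (ω : ℂ)))ᴴ * Uone P K L (Complex.I * (ω : ℂ)) = 1) ∧
    (∀ t : Fin N, ∀ ω : ℝ,
      (Complex.I * (ω : ℂ)) ∉ spectrum ℂ (mc (AKL P K L t.succ.castSucc)) →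
      (Usucc P K L t (Complex.I * (ω : ℂ)))ᴴ * Usucc P K L t (Complex.I * (ω : ℂ)) = 1) := by
  obtain ⟨hare1, hareS, _hd1, _hd2⟩ := hcoup
  constructor
  · -- case i = 1
    intro ω hω
    have hPsi0 : (Psidd P 0).PosDef := Psidd_posDef P hH 0
    have hdet0 : IsUnit ((Hdown P 0)ᵀ * Hdown P 0).det :=
      isUnit_iff_ne_zero.mpr (ne_of_gt hPsi0.det_pos)
    obtain ⟨c1, c2⟩ :=
      AREp_consequences P.A (Bdown P 0) P.F (Hdown P 0) (X 0) (K 0) hare1 hdet0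
    have hs : star (Complex.I * (ω : ℂ)) = -(Complex.I * (ω : ℂ)) := by
      simp [Complex.star_def, Complex.conj_I, Complex.conj_ofReal]
    have hinv : IsUnit ((Complex.I * (ω : ℂ)) • 1 - mc (AKL P K L 0)) := by
      have h2 := spectrum.notMem_iff.mp hω
      rwa [Algebra.algebraMap_eq_smul_one] at h2
    rw [AKL_zero] at hinv
    have hU : Uone P K L (Complex.I * (ω : ℂ)) =
        mc (P.F + Hdown P 0 * K 0) *
          ((Complex.I * (ω : ℂ)) • 1 - mc (P.A + Bdown P 0 * K 0))⁻¹ *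
          mc (Bdown P 0 * (msqrt (Psidd P 0))⁻¹) +
          mc (Hdown P 0 * (msqrt (Psidd P 0))⁻¹) := by
      rw [Uone, AKL_zero, mc_inv _ (msqrt_det_isUnit hPsi0),
        Matrix.mul_assoc (mc (P.F + Hdown P 0 * K 0) *
          ((Complex.I * (ω : ℂ)) • 1 - mc (P.A + Bdown P 0 * K 0))⁻¹),
        ← mc_mul, ← mc_mul]
    rw [hU]
    have h1 : (Hdown P 0 * (msqrt (Psidd P 0))⁻¹)ᵀ * (Hdown P 0 * (msqrt (Psidd P 0))⁻¹)
        = 1 := by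
      rw [Matrix.transpose_mul, msqrt_inv_symm hPsi0]
      have e : (msqrt (Psidd P 0))⁻¹ * (Hdown P 0)ᵀ * (Hdown P 0 * (msqrt (Psidd P 0))⁻¹)
          = (msqrt (Psidd P 0))⁻¹ * Psidd P 0 * (msqrt (Psidd P 0))⁻¹ := by
        rw [Psidd]; simp only [Matrix.mul_assoc]
      rw [e]
      exact msqrt_inv_mul_mul_inv hPsi0
    have h3 : (Hdown P 0 * (msqrt (Psidd P 0))⁻¹)ᵀ * (P.F + Hdown P 0 * K 0)
        = -((Bdown P 0 * (msqrt (Psidd P 0))⁻¹)ᵀ * X 0) := by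
      rw [Matrix.transpose_mul, msqrt_inv_symm hPsi0, Matrix.mul_assoc, c1,
        Matrix.transpose_mul, msqrt_inv_symm hPsi0, Matrix.mul_neg]
      simp only [Matrix.mul_assoc]
    exact inner_core _ _ _ _ (X 0) hare1.1 h1 c2 h3 _ hs hinv
  · -- case i ≥ 2
    intro t ω hω
    have hPj : (Psidd P t.castSucc).PosDef := Psidd_posDef P hH _
    have hPj' : (Psidd P t.succ).PosDef := Psidd_posDef P hH _
    have hdet' : IsUnit ((Hdown P t.succ)ᵀ * Hdown P t.succ).det :=
      isUnit_iff_ne_zero.mpr (ne_of_gt hPj'.det_pos)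
    obtain ⟨c1, c2⟩ := AREp_consequences (P.A + L t.castSucc * Cup P t.castSucc)
      (Bdown P t.succ) (-(Hdown P t.castSucc * K t.castSucc)) (Hdown P t.succ)
      (X t.succ) (K t.succ) (hareS t) hdet'
    have hs : star (Complex.I * (ω : ℂ)) = -(Complex.I * (ω : ℂ)) := by
      simp [Complex.star_def, Complex.conj_I, Complex.conj_ofReal]
    have hinv : IsUnit ((Complex.I * (ω : ℂ)) • 1 - mc (AKL P K L t.succ.castSucc)) := by
      have h2 := spectrum.notMem_iff.mp hω
      rwa [Algebra.algebraMap_eq_smul_one] at h2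
    rw [AKL_succ_eval] at hinv
    -- abbreviations
    obtain ⟨Ej, hEj⟩ : ∃ E, E = padGe P.md t.castSucc := ⟨_, rfl⟩
    obtain ⟨Ej', hEj'⟩ : ∃ E, E = padGe P.md t.succ := ⟨_, rfl⟩
    obtain ⟨Mm, hMm⟩ : ∃ M, M = padGe P.md t.succ * K t.succ -
      padGe P.md t.castSucc * K t.castSucc := ⟨_, rfl⟩
    obtain ⟨Sj, hSj⟩ : ∃ S, S = msqrt (Psidd P t.castSucc) := ⟨_, rfl⟩
    obtain ⟨Sj', hSj'⟩ : ∃ S, S = msqrt (Psidd P t.succ) := ⟨_, rfl⟩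
    have hjj' : t.castSucc ≤ t.succ := (Fin.castSucc_lt_succ (i := t)).le
    -- structural facts
    have hPiM : padGe P.md t.castSucc * (padGe P.md t.castSucc)ᵀ * Mm = Mm := by
      rw [hMm, Matrix.mul_sub, ← Matrix.mul_assoc, ← Matrix.mul_assoc,
        padGe_proj_absorb _ hjj', padGe_proj_absorb _ (le_refl _)]
    have hMPi : Mmᵀ * (padGe P.md t.castSucc * (padGe P.md t.castSucc)ᵀ) = Mmᵀ := by
      have := congrArg Matrix.transpose hPiM
      rw [Matrix.transpose_mul] at this
      rwa [Matrix.transpose_mul, Matrix.transpose_transpose] at this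
    have hSS : ∀ {γ : Type} (Z : Matrix (IdxGe P.md t.castSucc) γ ℝ),
        msqrt (Psidd P t.castSucc) * (msqrt (Psidd P t.castSucc) * Z)
          = Psidd P t.castSucc * Z := by
      intro γ Z
      rw [← Matrix.mul_assoc, msqrt_mul_self hPj.posSemidef]
    have hPsij_r : ∀ {γ : Type} (Z : Matrix (IdxGe P.md t.castSucc) γ ℝ),
        Psidd P t.castSucc * Z = (padGe P.md t.castSucc)ᵀ *
          (P.Hᵀ * (P.H * (padGe P.md t.castSucc * Z))) := by
      intro γ Z
      rw [Psidd, Hdown_eq, Matrix.transpose_mul]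
      simp only [Matrix.mul_assoc]
    have hPiM_r : padGe P.md t.castSucc * ((padGe P.md t.castSucc)ᵀ * Mm) = Mm := by
      rw [← Matrix.mul_assoc]; exact hPiM
    have hMPi_r : ∀ {γ : Type} (Z : Matrix (Idx P.md) γ ℝ),
        Mmᵀ * (padGe P.md t.castSucc * ((padGe P.md t.castSucc)ᵀ * Z)) = Mmᵀ * Z := by
      intro γ Z
      rw [← Matrix.mul_assoc (padGe P.md t.castSucc), ← Matrix.mul_assoc, hMPi]
    have hET'Pi_r : ∀ {γ : Type} (Z : Matrix (Idx P.md) γ ℝ),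
        (padGe P.md t.succ)ᵀ * (padGe P.md t.castSucc * ((padGe P.md t.castSucc)ᵀ * Z))
          = (padGe P.md t.succ)ᵀ * Z := by
      intro γ Z
      rw [← Matrix.mul_assoc (padGe P.md t.castSucc), ← Matrix.mul_assoc,
        padGeT_proj_absorb _ hjj']
    have habs1_r : ∀ {γ : Type} (Z : Matrix (IdxGe P.md t.succ) γ ℝ),
        padGe P.md t.castSucc * ((padGe P.md t.castSucc)ᵀ * (padGe P.md t.succ * Z))
          = padGe P.md t.succ * Z := by
      intro γ Z
      rw [← Matrix.mul_assoc (padGe P.md t.castSucc)ᵀ, ← Matrix.mul_assoc,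
        ← Matrix.mul_assoc, padGe_proj_absorb _ hjj']
    have hFH : -(Hdown P t.castSucc * K t.castSucc) + Hdown P t.succ * K t.succ
        = P.H * Mm := by
      rw [hMm, Hdown_eq, Hdown_eq, Matrix.mul_sub]
      simp only [Matrix.mul_assoc]
      abel
    -- the three hypotheses of inner_core
    have h1 : (msqrt (Psidd P t.castSucc) * ((padGe P.md t.castSucc)ᵀ * padGe P.md t.succ) *
          (msqrt (Psidd P t.succ))⁻¹)ᵀ *
        (msqrt (Psidd P t.castSucc) * ((padGe P.md t.castSucc)ᵀ * padGe P.md t.succ) *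
          (msqrt (Psidd P t.succ))⁻¹) = 1 := by
      rw [Matrix.transpose_mul, Matrix.transpose_mul, Matrix.transpose_mul,
        Matrix.transpose_transpose, msqrt_inv_symm hPj', msqrt_symm hPj.posSemidef]
      simp only [Matrix.mul_assoc]
      rw [hSS, hPsij_r, habs1_r, hET'Pi_r]
      have e : (msqrt (Psidd P t.succ))⁻¹ * ((padGe P.md t.succ)ᵀ *
            (P.Hᵀ * (P.H * (padGe P.md t.succ * (msqrt (Psidd P t.succ))⁻¹))))
          = (msqrt (Psidd P t.succ))⁻¹ * Psidd P t.succ * (msqrt (Psidd P t.succ))⁻¹ := by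
        rw [Psidd, Hdown_eq, Matrix.transpose_mul]
        simp only [Matrix.mul_assoc]
      rw [e]
      exact msqrt_inv_mul_mul_inv hPj'
    have h2 : (msqrt (Psidd P t.castSucc) * ((padGe P.md t.castSucc)ᵀ * Mm))ᵀ *
          (msqrt (Psidd P t.castSucc) * ((padGe P.md t.castSucc)ᵀ * Mm))
        = -((P.A + Bdown P t.succ * K t.succ + L t.castSucc * Cup P t.castSucc)ᵀ * X t.succ
            + X t.succ * (P.A + Bdown P t.succ * K t.succ + L t.castSucc * Cup P t.castSucc)) := by
      have lhs1 : (msqrt (Psidd P t.castSucc) * ((padGe P.md t.castSucc)ᵀ * Mm))ᵀ *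
            (msqrt (Psidd P t.castSucc) * ((padGe P.md t.castSucc)ᵀ * Mm))
          = Mmᵀ * (P.Hᵀ * (P.H * Mm)) := by
        rw [Matrix.transpose_mul, Matrix.transpose_mul, Matrix.transpose_transpose,
          msqrt_symm hPj.posSemidef]
        simp only [Matrix.mul_assoc]
        rw [hSS, hPsij_r, hPiM_r, hMPi_r]
      rw [lhs1]
      have rhs1 : (-(Hdown P t.castSucc * K t.castSucc) + Hdown P t.succ * K t.succ)ᵀ *
            (-(Hdown P t.castSucc * K t.castSucc) + Hdown P t.succ * K t.succ)
          = Mmᵀ * (P.Hᵀ * (P.H * Mm)) := by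
        rw [hFH, Matrix.transpose_mul]
        simp only [Matrix.mul_assoc]
      rw [← rhs1, c2]
      have e : P.A + L t.castSucc * Cup P t.castSucc + Bdown P t.succ * K t.succ
          = P.A + Bdown P t.succ * K t.succ + L t.castSucc * Cup P t.castSucc := by abel
      rw [e]
    have h3 : (msqrt (Psidd P t.castSucc) * ((padGe P.md t.castSucc)ᵀ * padGe P.md t.succ) *
          (msqrt (Psidd P t.succ))⁻¹)ᵀ *
        (msqrt (Psidd P t.castSucc) * ((padGe P.md t.castSucc)ᵀ * Mm))
        = -((Bdown P t.succ * (msqrt (Psidd P t.succ))⁻¹)ᵀ * X t.succ) := by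
      rw [Matrix.transpose_mul, Matrix.transpose_mul, Matrix.transpose_mul,
        Matrix.transpose_transpose, msqrt_inv_symm hPj', msqrt_symm hPj.posSemidef,
        Matrix.transpose_mul, msqrt_inv_symm hPj']
      simp only [Matrix.mul_assoc]
      rw [hSS, hPsij_r, hPiM_r, hET'Pi_r]
      have e : (padGe P.md t.succ)ᵀ * (P.Hᵀ * (P.H * Mm))
          = (Hdown P t.succ)ᵀ * (-(Hdown P t.castSucc * K t.castSucc) +
              Hdown P t.succ * K t.succ) := by
        rw [hFH, Hdown_eq, Matrix.transpose_mul]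
        simp only [Matrix.mul_assoc]
      rw [e, c1, Matrix.mul_neg]
    -- rewrite Usucc into inner_core form
    have hU : Usucc P K L t (Complex.I * (ω : ℂ)) =
        mc (msqrt (Psidd P t.castSucc) * ((padGe P.md t.castSucc)ᵀ * Mm)) *
          ((Complex.I * (ω : ℂ)) • 1 -
            mc (P.A + Bdown P t.succ * K t.succ + L t.castSucc * Cup P t.castSucc))⁻¹ *
          mc (Bdown P t.succ * (msqrt (Psidd P t.succ))⁻¹) +
          mc (msqrt (Psidd P t.castSucc) * ((padGe P.md t.castSucc)ᵀ * padGe P.md t.succ) *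
            (msqrt (Psidd P t.succ))⁻¹) := by
      rw [Usucc, AKL_succ_eval, mc_inv _ (msqrt_det_isUnit hPj'), ← hMm]
      rw [← mc_mul (msqrt (Psidd P t.castSucc)) ((padGe P.md t.castSucc)ᵀ * Mm)]
      rw [Matrix.mul_assoc (mc (msqrt (Psidd P t.castSucc) * ((padGe P.md t.castSucc)ᵀ * Mm)) *
        ((Complex.I * (ω : ℂ)) • 1 -
          mc (P.A + Bdown P t.succ * K t.succ + L t.castSucc * Cup P t.castSucc))⁻¹)]
      rw [← mc_mul (Bdown P t.succ) ((msqrt (Psidd P t.succ))⁻¹)]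
      rw [← mc_mul (msqrt (Psidd P t.castSucc)) ((padGe P.md t.castSucc)ᵀ * padGe P.md t.succ)]
      rw [← mc_mul (msqrt (Psidd P t.castSucc) * ((padGe P.md t.castSucc)ᵀ * padGe P.md t.succ))
        ((msqrt (Psidd P t.succ))⁻¹)]
    rw [hU]
    exact inner_core _ _ _ _ (X t.succ) (hareS t).1 h1 h2 h3 _ hs hinv

end TriLQG
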